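/- For every integer k ≥ 0, the characteristic polynomial det(x·I - R_{4k+2}) of the (4k+2)×(4k+2) matrix R_{4k+2} over the field ℤ/3ℤ equals (x^4 + 1)^k (x^2 - x - 1) if k is even, and (x^4 + 1)^k (x^2 + x - 1) if k is odd. -/

import Mathlib

open Polynomial

open Finset Matrix

set_option synthInstance.maxHeartbeats 1000000
set_option maxHeartbeats 1000000
set_option linter.unusedTactic false
set_option linter.unnecessarySeqFocus false

noncomputable section

abbrev F3 := ZMod 3

def relpoly : F3[X] := X ^ 2 - X - 1

lemma relpoly_natDegree : relpoly.natDegree = 2 := by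
  unfold relpoly; compute_degree!

lemma relpoly_irred : Irreducible relpoly := by
  rw [irreducible_iff_roots_eq_zero_of_degree_le_three (by rw [relpoly_natDegree])
    (by rw [relpoly_natDegree]; norm_num)]
  rw [Multiset.eq_zero_iff_forall_notMem]
  intro a ha
  rw [mem_roots (by
    intro h
    have := relpoly_natDegree
    rw [h] at this; simp at this)] at ha
  have h2 : a ^ 2 - a - 1 = 0 := by
    simpa [relpoly, IsRoot] using ha
  clear ha
  revert a; decide

instance : Fact (Irreducible relpoly) := ⟨relpoly_irred⟩

abbrev K := AdjoinRoot relpoly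

def α : K := AdjoinRoot.root relpoly

lemma hrel : α ^ 2 = α + 1 := by
  have h : α ^ 2 - α - 1 = 0 := by
    have := AdjoinRoot.eval₂_root relpoly
    have e : ∀ x : K, eval₂ (AdjoinRoot.of relpoly) x relpoly = x ^ 2 - x - 1 := by
      intro x
      show eval₂ (AdjoinRoot.of relpoly) x (X ^ 2 - X - 1 : F3[X]) = _
      simp
    simpa [e, α] using this
  linear_combination h

lemma h3 : (3 : K) = 0 := by
  have h := map_natCast (algebraMap F3 K) 3
  have h0 : ((3:ℕ) : F3) = 0 := rfl
  rw [h0, map_zero] at h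
  exact_mod_cast h.symm

lemma hα4 : α ^ 4 = -1 := by linear_combination (α^2 + α + 2) * hrel + (α + 1) * h3

lemma hα8 : α ^ 8 = 1 := by
  have : α ^ 8 = (α^4)^2 := by ring
  rw [this, hα4]; ring


section GenericField
variable {L : Type*} [Field L]

/-- homogeneous evaluation -/
def hEval (N : ℕ) (P : L[X]) (y z : L[X]) : L[X] :=
  ∑ m ∈ Finset.range (N+1), C (P.coeff m) * y^m * z^(N-m)

local notation "iFR" => algebraMap (Polynomial L) (RatFunc L)

lemma hEval_eq (N : ℕ) (P y z : L[X]) (hz : z ≠ 0) (hP : P.natDegree ≤ N) :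
    iFR (hEval N P y z) = (iFR z)^N * Polynomial.aeval ((iFR y)/(iFR z)) P := by
  have hz' : (iFR z) ≠ 0 := by
    simpa using (map_ne_zero_iff _ (IsFractionRing.injective (Polynomial L) (RatFunc L))).mpr hz
  rw [Polynomial.aeval_eq_sum_range' (lt_of_le_of_lt hP (Nat.lt_succ_self N)), Finset.mul_sum]
  rw [hEval, _root_.map_sum]
  refine Finset.sum_congr rfl fun m hm => ?_
  rw [Finset.mem_range] at hm
  have hm' : m ≤ N := Nat.lt_succ_iff.mp hm
  rw [_root_.map_mul, _root_.map_mul]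
  have hC : iFR (C (P.coeff m)) = algebraMap L (RatFunc L) (P.coeff m) := by
    rw [RatFunc.algebraMap_C, RatFunc.algebraMap_eq_C]
  rw [Algebra.smul_def, hC, div_pow, _root_.map_pow, _root_.map_pow]
  field_simp
  rw [← pow_sub_mul_pow (iFR z) hm']
  ring

lemma hEval_mul (N₁ N₂ : ℕ) (P Q y z : L[X]) (hz : z ≠ 0)
    (hP : P.natDegree ≤ N₁) (hQ : Q.natDegree ≤ N₂) :
    hEval (N₁+N₂) (P*Q) y z = hEval N₁ P y z * hEval N₂ Q y z := by
  apply IsFractionRing.injective (Polynomial L) (RatFunc L)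
  rw [_root_.map_mul, hEval_eq _ _ _ _ hz hP, hEval_eq _ _ _ _ hz hQ,
    hEval_eq _ _ _ _ hz (le_trans (natDegree_mul_le) (add_le_add hP hQ)), _root_.map_mul, pow_add]
  ring

lemma hEval_pow (j : ℕ) (p y z : L[X]) (hz : z ≠ 0) (hp : p.natDegree ≤ 1) :
    hEval j (p^j) y z = (hEval 1 p y z)^j := by
  induction j with
  | zero => simp [hEval]
  | succ j ih =>
      have : hEval (j+1) (p^(j+1)) y z = hEval j (p^j) y z * hEval 1 p y z := by
        rw [← hEval_mul j 1 _ _ _ _ hz (natDegree_pow_le.trans (by calc j * p.natDegree ≤ j * 1 := Nat.mul_le_mul_left _ hp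
          _ = j := mul_one j)) hp, pow_succ]
      rw [this, ih, pow_succ]

lemma hEval_linear (a b : L) (y z : L[X]) :
    hEval 1 (C a * X + C b) y z = C a * y + C b * z := by
  simp [hEval, Finset.sum_range_succ]
  ring


/-- the matrix whose `j`-th column consists of the coefficients of `(aX+b)^j (cX+d)^(n-1-j)` -/
def Tmat (n : ℕ) (a b c d : L) : Matrix (Fin n) (Fin n) L :=
  Matrix.of fun i j => ((C a * X + C b)^(j:ℕ) * (C c * X + C d)^(n-1-(j:ℕ))).coeff i

lemma Tmat_mul (n : ℕ) (a b c d a' b' c' d' : L) (hz : C c * X + C d ≠ (0 : L[X])) :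
    Tmat n a b c d * Tmat n a' b' c' d' =
      Tmat n (a'*a+b'*c) (a'*b+b'*d) (c'*a+d'*c) (c'*b+d'*d) := by
  ext i j
  have hn : 0 < n := Fin.pos i
  have hj : (j:ℕ) ≤ n - 1 := by omega
  rw [Matrix.mul_apply]
  set y : L[X] := C a * X + C b
  set z : L[X] := C c * X + C d
  have hlin : ∀ (u v : L), (C u * X + C v : L[X]).natDegree ≤ 1 := fun u v => by
    apply Polynomial.natDegree_add_le_of_degree_le
    · exact (natDegree_C_mul_le _ _).trans (by simp)
    · simp
  have key : ∑ l : Fin n, Tmat n a b c d i l * Tmat n a' b' c' d' l j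
      = (hEval (n-1) ((C a' * X + C b')^(j:ℕ) * (C c' * X + C d')^(n-1-(j:ℕ))) y z).coeff i := by
    rw [hEval, finset_sum_coeff]
    have hsplit : n - 1 + 1 = n := by omega
    rw [hsplit, ← Fin.sum_univ_eq_sum_range]
    refine Finset.sum_congr rfl fun l _ => ?_
    rw [mul_assoc, coeff_C_mul]
    rw [mul_comm]
    rfl
  rw [key]
  set m := n - 1 - (j:ℕ) with hm
  have hsplit2 : n - 1 = (j:ℕ) + m := by omega
  rw [hsplit2, hEval_mul _ _ _ _ _ _ hz (natDegree_pow_le.trans (by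
        calc (j:ℕ) * (C a' * X + C b').natDegree ≤ (j:ℕ) * 1 := Nat.mul_le_mul_left _ (hlin a' b')
          _ = (j:ℕ) := mul_one _))
    (natDegree_pow_le.trans (by
        calc m * (C c' * X + C d').natDegree ≤ m * 1 := Nat.mul_le_mul_left _ (hlin c' d')
          _ = m := mul_one _)),
    hEval_pow _ _ _ _ hz (hlin a' b'), hEval_pow _ _ _ _ hz (hlin c' d'),
    hEval_linear, hEval_linear]
  have e1 : C a' * y + C b' * z = C (a'*a+b'*c) * X + C (a'*b+b'*d) := by
    simp only [y, z, map_add, _root_.map_mul]; ring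
  have e2 : C c' * y + C d' * z = C (c'*a+d'*c) * X + C (c'*b+d'*d) := by
    simp only [y, z, map_add, _root_.map_mul]; ring
  rw [e1, e2]
  show _ = ((C (a'*a+b'*c) * X + C (a'*b+b'*d))^(j:ℕ) * (C (c'*a+d'*c) * X + C (c'*b+d'*d))^(n-1-(j:ℕ))).coeff i
  rw [← hm]


end GenericField

section CharPolyLemmas
variable {R : Type*} [CommRing R] {n : ℕ}

lemma my_charpoly_transpose (M : Matrix (Fin n) (Fin n) R) : M.transpose.charpoly = M.charpoly := by
  have h : charmatrix M.transpose = (charmatrix M).transpose := by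
    refine Matrix.ext fun i j => ?_
    by_cases hij : i = j
    · subst hij; simp
    · simp [charmatrix_apply_ne _ _ _ hij, charmatrix_apply_ne _ _ _ (Ne.symm hij)]
  rw [Matrix.charpoly, h, Matrix.det_transpose, Matrix.charpoly]

lemma my_charpoly_diagonal (d : Fin n → R) :
    (Matrix.diagonal d).charpoly = ∏ i : Fin n, (X - C (d i)) := by
  have h : charmatrix (Matrix.diagonal d) = Matrix.diagonal (fun i => X - C (d i)) := by
    refine Matrix.ext fun i j => ?_
    by_cases hij : i = j
    · subst hij; simp
    · rw [charmatrix_apply_ne _ _ _ hij, Matrix.diagonal_apply_ne _ hij,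
        Matrix.diagonal_apply_ne _ hij]
      simp
  rw [Matrix.charpoly, h, Matrix.det_diagonal]

lemma my_charpoly_similar (A B D : Matrix (Fin n) (Fin n) R)
    (hB : IsUnit B.det) (h : A * B = B * D) : A.charpoly = D.charpoly := by
  haveI := B.invertibleOfIsUnitDet hB
  have hA : A = B * D * B⁻¹ := by
    rw [← h, Matrix.mul_assoc, Matrix.mul_nonsing_inv _ hB, Matrix.mul_one]
  have hBC : (B.map (C : R →+* R[X])) * (B⁻¹.map C) = 1 := by
    rw [← Matrix.map_mul, Matrix.mul_nonsing_inv _ hB]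
    simp
  have hCB : (B⁻¹.map (C : R →+* R[X])) * (B.map C) = 1 := by
    rw [← Matrix.map_mul, Matrix.nonsing_inv_mul _ hB]
    simp
  have hch : ∀ (M : Matrix (Fin n) (Fin n) R),
      charmatrix M = (X : R[X]) • (1 : Matrix (Fin n) (Fin n) R[X]) - M.map C := by
    intro M
    refine Matrix.ext fun i j => ?_
    by_cases hij : i = j
    · subst hij
      simp [charmatrix_apply_eq, Matrix.smul_apply, Matrix.one_apply, Matrix.map_apply]
    · simp [charmatrix_apply_ne _ _ _ hij, Matrix.smul_apply, Matrix.one_apply_ne hij,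
        Matrix.map_apply]
  have hcm : charmatrix A = (B.map C) * charmatrix D * (B⁻¹.map C) := by
    rw [hch, hch, hA, Matrix.map_mul, Matrix.map_mul]
    rw [Matrix.mul_sub, Matrix.sub_mul]
    congr 1
    · rw [Matrix.mul_smul, Matrix.mul_one, Matrix.smul_mul, hBC]
  rw [Matrix.charpoly, hcm, Matrix.det_mul, Matrix.det_mul, mul_comm, ← mul_assoc,
    ← Matrix.det_mul, hCB]
  simp [Matrix.charpoly]


end CharPolyLemmas

noncomputable def β : K := 1 - α

lemma hβrel : β ^ 2 = β + 1 := by unfold β; linear_combination hrel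
lemma hβα : β = α ^ 3 := by unfold β; linear_combination (-(α+1))*hrel + (-α)*h3

lemma hs_ne : (β - α : K) ≠ 0 := by
  intro h
  unfold β at h
  exact one_ne_zero (α := K) (by linear_combination hrel - (1+α)*h + (1-α^2)*h3)

lemma lin_ne (a b : K) (ha : a ≠ 0) : C a * X + C b ≠ (0 : K[X]) := by
  intro h
  have := congrArg (fun p => Polynomial.coeff p 1) h
  simp at this
  exact ha this

variable (n : ℕ)

lemma step1 : Tmat n (0:K) 1 1 1 * Tmat n 1 α 1 β = Tmat n α (1+α) β (1+β) := by
  rw [Tmat_mul n (0:K) 1 1 1 1 α 1 β (lin_ne 1 1 one_ne_zero)]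
  congr 1 <;> ring

lemma step2 : Tmat n α (1+α) β (1+β) =
    Tmat n (1:K) α 1 β * Matrix.diagonal (fun j : Fin n => α^(j:ℕ) * β^(n-1-(j:ℕ))) := by
  refine Matrix.ext fun i j => ?_
  rw [Matrix.mul_diagonal]
  show ((C α * X + C (1+α))^(j:ℕ) * (C β * X + C (1+β))^(n-1-(j:ℕ))).coeff i
    = ((C 1 * X + C α)^(j:ℕ) * (C 1 * X + C β)^(n-1-(j:ℕ))).coeff i * (α^(j:ℕ) * β^(n-1-(j:ℕ)))
  have h2 : (C α : K[X])^2 = C α + 1 := by rw [← C_pow, hrel, C_add, C_1]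
  have h2' : (C β : K[X])^2 = C β + 1 := by rw [← C_pow, hβrel, C_add, C_1]
  have e1 : (C α * X + C (1+α) : K[X]) = C α * (C 1 * X + C α) := by
    rw [C_add, C_1]; linear_combination -h2
  have e2 : (C β * X + C (1+β) : K[X]) = C β * (C 1 * X + C β) := by
    rw [C_add, C_1]; linear_combination -h2'
  rw [e1, e2, mul_pow, mul_pow, ← C_pow, ← C_pow]
  rw [show C (α^(j:ℕ)) * (C 1 * X + C α)^(j:ℕ) * (C (β^(n-1-(j:ℕ))) * (C 1 * X + C β)^(n-1-(j:ℕ)))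
      = C (α^(j:ℕ) * β^(n-1-(j:ℕ))) * ((C 1 * X + C α)^(j:ℕ) * (C 1 * X + C β)^(n-1-(j:ℕ))) by
    rw [C_mul]; ring]
  rw [coeff_C_mul]
  ring

lemma step3 : Tmat n (1:K) α 1 β * Tmat n β (-α) (-1) 1 = Tmat n (β-α) 0 0 (β-α) := by
  rw [Tmat_mul n (1:K) α 1 β β (-α) (-1) 1 (lin_ne 1 β one_ne_zero)]
  congr 1 <;> ring

lemma step4 : Tmat n (β-α) (0:K) 0 (β-α) = ((β-α)^(n-1)) • (1 : Matrix (Fin n) (Fin n) K) := by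
  refine Matrix.ext fun i j => ?_
  show ((C (β-α) * X + C 0)^(j:ℕ) * (C (0:K) * X + C (β-α))^(n-1-(j:ℕ))).coeff i = _
  have hj : (j:ℕ) + (n-1-(j:ℕ)) = n - 1 := by have := j.2; omega
  rw [C_0, add_zero, zero_mul, zero_add, mul_pow, ← C_pow, ← C_pow,
    show C ((β-α)^(j:ℕ)) * X^(j:ℕ) * C ((β-α)^(n-1-(j:ℕ)))
      = C ((β-α)^(j:ℕ) * (β-α)^(n-1-(j:ℕ))) * X^(j:ℕ) by rw [C_mul]; ring,
    ← pow_add, hj, coeff_C_mul, coeff_X_pow]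
  simp [Matrix.smul_apply, Matrix.one_apply, Fin.ext_iff, eq_comm]

lemma Bdet_isUnit : IsUnit (Tmat n (1:K) α 1 β).det := by
  have h := step3 n
  rw [step4 n] at h
  have hdet := congrArg Matrix.det h
  rw [Matrix.det_mul, Matrix.det_smul, Matrix.det_one, mul_one] at hdet
  have hne : ((β-α)^(n-1))^(Fintype.card (Fin n)) ≠ 0 := pow_ne_zero _ (pow_ne_zero _ hs_ne)
  exact IsUnit.of_mul_eq_one ((Tmat n β (-α) (-1) 1).det * (((β-α)^(n-1))^(Fintype.card (Fin n)))⁻¹)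
    (by rw [← mul_assoc, hdet, mul_inv_cancel₀ hne])

lemma charpoly_TA : (Tmat n (0:K) 1 1 1).charpoly
    = ∏ j : Fin n, (X - C (α^(j:ℕ) * β^(n-1-(j:ℕ)))) := by
  rw [my_charpoly_similar (Tmat n (0:K) 1 1 1) (Tmat n (1:K) α 1 β)
      (Matrix.diagonal (fun j : Fin n => α^(j:ℕ) * β^(n-1-(j:ℕ)))) (Bdet_isUnit n)
      (by rw [step1 n, ← step2 n]),
    my_charpoly_diagonal]


/-- `R n` over `ℤ/3ℤ`: the `(i,j)` entry (1-based) is `C(i-1, n-j)` mod 3. -/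
def binR3 (n : ℕ) : Matrix (Fin n) (Fin n) (ZMod 3) :=
  fun i j => (Nat.choose i (n - 1 - j) : ZMod 3)

lemma TA_eq (n : ℕ) :
    Tmat n (0:K) 1 1 1 =
      (Matrix.reindex Fin.revPerm Fin.revPerm
        (((binR3 n).map (algebraMap F3 K)).transpose)) := by
  refine Matrix.ext fun i j => ?_
  have hL : Tmat n (0:K) 1 1 1 i j = ((Nat.choose (n-1-(j:ℕ)) (i:ℕ) : K)) := by
    show ((C (0:K) * X + C 1)^(j:ℕ) * (C (1:K) * X + C 1)^(n-1-(j:ℕ))).coeff i = _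
    rw [C_0, zero_mul, zero_add, C_1, one_pow, one_mul, one_mul, coeff_X_add_one_pow]
  rw [hL]
  show _ = ((binR3 n).map (algebraMap F3 K)) (Fin.revPerm.symm j) (Fin.revPerm.symm i)
  rw [Fin.revPerm_symm]
  show _ = algebraMap F3 K ((Nat.choose (Fin.rev j) (n - 1 - ((Fin.rev i : Fin n) : ℕ)) : F3))
  rw [map_natCast]
  congr 1
  have hi := i.2
  have hj := j.2
  rw [Fin.val_rev, Fin.val_rev]
  congr 1 <;> omega

lemma charpoly_binR3_map (n : ℕ) :
    (binR3 n).charpoly.map (algebraMap F3 K)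
      = ∏ j : Fin n, (X - C (α^(j:ℕ) * β^(n-1-(j:ℕ)))) := by
  rw [← Matrix.charpoly_map, ← my_charpoly_transpose ((binR3 n).map (algebraMap F3 K)),
    ← Matrix.charpoly_reindex Fin.revPerm, ← TA_eq, charpoly_TA]


lemma h3' : (3 : K[X]) = 0 := by
  have h := congrArg (C : K →+* K[X]) h3
  rw [map_zero] at h
  calc (3:K[X]) = ((3:ℕ):K[X]) := by norm_cast
    _ = C (((3:ℕ):K)) := (C_eq_natCast (3:ℕ)).symm
    _ = C (3:K) := by norm_cast
    _ = 0 := h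

lemma hc : (C α : K[X])^2 = C α + 1 := by rw [← C_pow, hrel, C_add, C_1]

lemma base2 : ((X:K[X]) - C (α^3)) * ((X:K[X]) - C (α^9)) = X^2 - X - 1 := by
  have h9 : α^9 = α := by
    rw [show (9:ℕ) = 8+1 from rfl, pow_add, hα8, one_mul, pow_one]
  rw [h9, C_pow]
  linear_combination ((C α:K[X])^2 + C α + 2 - X*(C α + 1))*hc + ((C α:K[X]) + 1 - X*(C α))*h3'

lemma hw : (C (α^2) : K[X])^2 = -1 := by
  rw [← C_pow, ← pow_mul, show (2*2:ℕ) = 4 from rfl, hα4, C_neg, C_1]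

lemma headlem (m : ℕ) (hu : (α^m)^4 = -1) :
    ∏ j ∈ range 4, ((X:K[X]) - C (α^(m+6*j))) = X^4+1 := by
  have s6 : α^(m+6*1) = α^m * (-(α^2)) := by
    rw [pow_add, show (6*1:ℕ) = 4+2 from rfl, pow_add, hα4]; ring
  have s12 : α^(m+6*2) = α^m * (-1) := by
    rw [pow_add, show (6*2:ℕ) = 4*3 from rfl, pow_mul, hα4]; ring
  have s18 : α^(m+6*3) = α^m * (α^2) := by
    rw [pow_add, show (6*3:ℕ) = 8*2+2 from rfl, pow_add, pow_mul, hα8]; ring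
  rw [prod_range_succ, prod_range_succ, prod_range_succ, prod_range_one]
  rw [show (m+6*0:ℕ) = m by ring, s6, s12, s18, C_mul, C_mul, C_mul, C_neg, C_neg, C_1]
  have hcu : (C (α^m) : K[X])^4 = -1 := by rw [← C_pow, hu, C_neg, C_1]
  linear_combination (-((X:K[X])^2-(C (α^m))^2)*(C (α^m))^2)*hw + (-1 : K[X])*hcu

lemma Gprod (k : ℕ) : ∏ j ∈ range (4*k+2), ((X:K[X]) - C (α^(12*k+3+6*j)))
    = if Even k then (X^4+1:K[X])^k * (X^2-X-1) else (X^4+1:K[X])^k * (X^2+X-1) := by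
  induction k with
  | zero =>
      rw [if_pos (Even.zero)]
      rw [show (4*0+2:ℕ) = 2 from rfl, prod_range_succ, prod_range_one]
      rw [show (12*0+3+6*0:ℕ) = 3 from rfl, show (12*0+3+6*1:ℕ) = 9 from rfl]
      rw [base2]
      ring
  | succ k ih =>
      rw [show (4*(k+1)+2:ℕ) = 4+(4*k+2) by ring, prod_range_add]
      have hhead : ∏ j ∈ range 4, ((X:K[X]) - C (α^(12*(k+1)+3+6*j))) = X^4+1 := by
        have := headlem (12*k+15) (by
          rw [← pow_mul, show (12*k+15)*4 = 8*(6*k+7)+4 by ring, pow_add, pow_mul, hα8,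
            one_pow, one_mul, hα4])
        rw [← this]
        exact Finset.prod_congr rfl fun j _ => by rw [show 12*(k+1)+3+6*j = 12*k+15+6*j by ring]
      rw [hhead]
      have htail : ∏ j ∈ range (4*k+2), ((X:K[X]) - C (α^(12*(k+1)+3+6*(4+j))))
          = ∏ j ∈ range (4*k+2), ((X:K[X]) + C (α^(12*k+3+6*j))) := by
        refine Finset.prod_congr rfl fun j _ => ?_
        have h36 : (α:K)^(8*4+4) = -1 := by
          rw [pow_add, pow_mul, hα8, one_pow, one_mul, hα4]
        have e36 : α^(12*(k+1)+3+6*(4+j)) = α^(12*k+3+6*j) * (-1) := by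
          rw [show 12*(k+1)+3+6*(4+j) = (12*k+3+6*j)+(8*4+4) by ring, pow_add, h36]
        rw [e36, C_mul, C_neg, C_1]
        ring
      rw [htail]
      have hphi : ∏ j ∈ range (4*k+2), ((X:K[X]) + C (α^(12*k+3+6*j)))
          = Polynomial.aeval (-X : K[X])
              (∏ j ∈ range (4*k+2), ((X:K[X]) - C (α^(12*k+3+6*j)))) := by
        rw [map_prod]
        have : ∀ j ∈ range (4*k+2), Polynomial.aeval (-X : K[X]) ((X:K[X]) - C (α^(12*k+3+6*j)))
            = (-1) * ((X:K[X]) + C (α^(12*k+3+6*j))) := by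
          intro j _
          rw [map_sub, Polynomial.aeval_X, Polynomial.aeval_C, Polynomial.algebraMap_eq]
          ring
        rw [Finset.prod_congr rfl this, Finset.prod_mul_distrib, Finset.prod_const,
          Finset.card_range]
        have : ((-1 : K[X]))^(4*k+2) = 1 := Even.neg_one_pow ⟨2*k+1, by ring⟩
        rw [this, one_mul]
      rw [hphi, ih]
      rcases Nat.even_or_odd k with he | ho
      · rw [if_pos he, if_neg (by simpa [Nat.even_add_one] using he)]
        simp only [_root_.map_mul, _root_.map_pow, _root_.map_add, map_sub, _root_.map_one,
          Polynomial.aeval_X]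
        ring
      · rw [if_neg (Nat.not_even_iff_odd.mpr ho), if_pos (Nat.even_add_one.mpr
          (Nat.not_even_iff_odd.mpr ho))]
        simp only [_root_.map_mul, _root_.map_pow, _root_.map_add, map_sub, _root_.map_one,
          Polynomial.aeval_X]
        ring



lemma final_prod (k : ℕ) :
    ∏ j : Fin (4*k+2), ((X:K[X]) - C (α^(j:ℕ) * β^(4*k+2-1-(j:ℕ))))
      = if Even k then (X^4+1:K[X])^k * (X^2-X-1) else (X^4+1:K[X])^k * (X^2+X-1) := by
  rw [Fin.prod_univ_eq_prod_range (fun j => ((X:K[X]) - C (α^j * β^(4*k+2-1-j)))) (4*k+2),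
    ← Gprod k]
  refine Finset.prod_congr rfl fun j hj => ?_
  rw [Finset.mem_range] at hj
  have hexp : 12*k+3+6*j = (j + 3*(4*k+2-1-j)) + 8*j := by omega
  have hval : α^j * β^(4*k+2-1-j) = α^(12*k+3+6*j) := by
    calc α^j * β^(4*k+2-1-j) = α^(j+3*(4*k+2-1-j)) := by rw [hβα, ← pow_mul, ← pow_add]
      _ = α^(j+3*(4*k+2-1-j)) * (α^8)^j := by rw [hα8, one_pow, mul_one]
      _ = α^(12*k+3+6*j) := by rw [← pow_mul, ← pow_add, ← hexp]
  rw [hval]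

theorem stmt_8 (k : ℕ) :
    (binR3 (4 * k + 2)).charpoly =
      if Even k then ((X ^ 4 + 1 : (ZMod 3)[X]) ^ k * (X ^ 2 - X - 1))
      else ((X ^ 4 + 1 : (ZMod 3)[X]) ^ k * (X ^ 2 + X - 1)) := by
  have hinj : Function.Injective (Polynomial.map (algebraMap F3 K)) :=
    Polynomial.map_injective _ ((algebraMap F3 K).injective)
  apply hinj
  rw [charpoly_binR3_map (4*k+2), final_prod k]
  rcases Nat.even_or_odd k with he | ho
  · rw [if_pos he, if_pos he]
    simp only [Polynomial.map_mul, Polynomial.map_pow, Polynomial.map_add, Polynomial.map_sub,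
      Polynomial.map_one, Polynomial.map_X]
  · rw [if_neg (Nat.not_even_iff_odd.mpr ho), if_neg (Nat.not_even_iff_odd.mpr ho)]
    simp only [Polynomial.map_mul, Polynomial.map_pow, Polynomial.map_add, Polynomial.map_sub,
      Polynomial.map_one, Polynomial.map_X]

end
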